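/- arXiv:2112.14224 — 4 statements merged into one kernel-verified Lean document; each statement's English description precedes it below -/
import Mathlib

section
/- Let (E, 𝓔) be a measurable space and κ a Markov kernel on E satisfying a Doeblin minorization with constant c > 0 and nonzero finite measure λ. Then for every bounded measurable f : E → ℝ and all x₁, x₂ ∈ E, |(κ f)(x₁) − (κ f)(x₂)| ≤ (1 − c·λ(E)) · osc(f), where necessarily 0 ≤ c·λ(E) ≤ 1. -/
open MeasureTheory ProbabilityTheory
open scoped ENNReal NNReal

/-- Doeblin minorization: one-step contraction of the oscillation. If a Markov kernel `κ`
satisfies `κ x B ≥ c·λ(B)` for a constant `c > 0` and a nonzero finite measure `λ`, then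
necessarily `0 ≤ c·λ(E) ≤ 1`, and for every bounded measurable `f` and all `x₁ x₂`,
`|κ f (x₁) - κ f (x₂)| ≤ (1 - c·λ(E)) · osc f`. -/
theorem stmt1 {E : Type*} [MeasurableSpace E]
    (κ : Kernel E E) [IsMarkovKernel κ]
    (c : ℝ≥0) (hc : 0 < c)
    (lam : Measure E) [IsFiniteMeasure lam] (hlam : lam ≠ 0)
    (hdoeblin : ∀ (x : E) (B : Set E), MeasurableSet B → (c : ℝ≥0∞) * lam B ≤ κ x B)
    (f : E → ℝ) (hf : Measurable f) (C : ℝ) (hfb : ∀ x, |f x| ≤ C)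
    (x₁ x₂ : E) :
    (0 ≤ ((c : ℝ≥0∞) * lam Set.univ).toReal ∧ ((c : ℝ≥0∞) * lam Set.univ).toReal ≤ 1) ∧
      |(∫ y, f y ∂(κ x₁)) - ∫ y, f y ∂(κ x₂)| ≤
        (1 - ((c : ℝ≥0∞) * lam Set.univ).toReal) * ((⨆ x, f x) - ⨅ x, f x) := by
  haveI : Nonempty E := by
    by_contra h
    rw [not_nonempty_iff] at h
    exact hlam (by ext s hs; simp [Set.eq_empty_of_isEmpty s])
  -- the minorizing measure as a measure
  have hle : ∀ x, (c • lam : Measure E) ≤ κ x := fun x =>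
    Measure.le_iff.2 fun s hs => by
      rw [Measure.smul_apply, ENNReal.smul_def, smul_eq_mul]; exact hdoeblin x s hs
  have ha1 : ((c : ℝ≥0∞) * lam Set.univ) ≤ 1 := by
    have := hdoeblin x₁ Set.univ MeasurableSet.univ
    simpa using this
  have hane : ((c : ℝ≥0∞) * lam Set.univ) ≠ ∞ := ne_top_of_le_ne_top ENNReal.one_ne_top ha1
  have haR : ((c : ℝ≥0∞) * lam Set.univ).toReal ≤ 1 := by
    have := ENNReal.toReal_mono ENNReal.one_ne_top ha1
    simpa using this
  refine ⟨⟨ENNReal.toReal_nonneg, haR⟩, ?_⟩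
  set a := ((c : ℝ≥0∞) * lam Set.univ).toReal with ha_def
  have hbdd : BddAbove (Set.range f) := ⟨C, by rintro - ⟨x, rfl⟩; exact (abs_le.1 (hfb x)).2⟩
  have hbddb : BddBelow (Set.range f) := ⟨-C, by rintro - ⟨x, rfl⟩; exact (abs_le.1 (hfb x)).1⟩
  set S := ⨆ x, f x with hS
  set I := ⨅ x, f x with hI
  have hfS : ∀ x, f x ≤ S := fun x => le_ciSup hbdd x
  have hfI : ∀ x, I ≤ f x := fun x => ciInf_le hbddb x
  -- total mass of the residual measures
  have hmass : ∀ x, (((κ x) - (c • lam) : Measure E) Set.univ).toReal = 1 - a := by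
    intro x
    rw [Measure.sub_apply MeasurableSet.univ (hle x)]
    have h1 : (κ x) Set.univ = 1 := measure_univ
    have h2 : ((c • lam : Measure E)) Set.univ = (c : ℝ≥0∞) * lam Set.univ := by
      rw [Measure.smul_apply, ENNReal.smul_def, smul_eq_mul]
    rw [h1, h2, ENNReal.toReal_sub_of_le ha1 ENNReal.one_ne_top]
    simp [ha_def]
  -- integrability of f against any finite measure
  have hint : ∀ (μ : Measure E) [IsFiniteMeasure μ], Integrable f μ := by
    intro μ _
    exact (integrable_const C).mono' hf.aestronglyMeasurable (ae_of_all _ hfb)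
  -- decomposition of the integral
  have hdecomp : ∀ x, (∫ y, f y ∂(κ x)) =
      (∫ y, f y ∂((κ x) - (c • lam))) + ∫ y, f y ∂((c • lam : Measure E)) := by
    intro x
    haveI : IsFiniteMeasure ((κ x) - (c • lam) : Measure E) :=
      isFiniteMeasure_of_le _ (Measure.sub_le)
    conv_lhs => rw [← Measure.sub_add_cancel_of_le (hle x)]
    exact integral_add_measure (hint _) (hint _)
  have hnonneg : 0 ≤ 1 - a := by linarith
  -- key one-sided bound
  have key : ∀ x y : E, (∫ z, f z ∂(κ x)) - ∫ z, f z ∂(κ y) ≤ (1 - a) * (S - I) := by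
    intro x y
    haveI : IsFiniteMeasure ((κ x) - (c • lam) : Measure E) :=
      isFiniteMeasure_of_le _ (Measure.sub_le)
    haveI : IsFiniteMeasure ((κ y) - (c • lam) : Measure E) :=
      isFiniteMeasure_of_le _ (Measure.sub_le)
    have hub : (∫ z, f z ∂((κ x) - (c • lam))) ≤ (1 - a) * S := by
      calc (∫ z, f z ∂((κ x) - (c • lam))) ≤ ∫ _, S ∂((κ x) - (c • lam)) :=
            integral_mono (hint _) (integrable_const S) hfS
        _ = (1 - a) * S := by rw [integral_const, measureReal_def, hmass x, smul_eq_mul]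
    have hlb : (1 - a) * I ≤ ∫ z, f z ∂((κ y) - (c • lam)) := by
      calc (1 - a) * I = ∫ _, I ∂((κ y) - (c • lam)) := by
            rw [integral_const, measureReal_def, hmass y, smul_eq_mul]
        _ ≤ ∫ z, f z ∂((κ y) - (c • lam)) :=
            integral_mono (integrable_const I) (hint _) hfI
    rw [hdecomp x, hdecomp y]
    have : (∫ z, f z ∂((κ x) - (c • lam))) - ∫ z, f z ∂((κ y) - (c • lam)) ≤
        (1 - a) * S - (1 - a) * I := by linarith
    linarith [this]
  rw [abs_sub_le_iff]
  exact ⟨key x₁ x₂, key x₂ x₁⟩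
end

section
/- Let (E, 𝓔) be a measurable space and κ a Markov kernel on E satisfying a Doeblin minorization with constant c > 0 and nonzero finite measure λ. Then for every bounded measurable f : E → ℝ there exists a constant ū ∈ ℝ such that for all n ≥ 0 and all x ∈ E, |(κⁿ f)(x) − ū| ≤ (1 − c·λ(E))ⁿ · osc(f). In particular, the functions κⁿ f converge uniformly on E to the constant ū at a geometric rate. -/
open MeasureTheory ProbabilityTheory
open scoped ENNReal NNReal

/-- The `n`-fold iterate of a Markov kernel. -/
noncomputable def iterK {E : Type*} [MeasurableSpace E] (κ : Kernel E E) : ℕ → Kernel E E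
  | 0 => Kernel.id
  | n + 1 => κ ∘ₖ iterK κ n

section Aux

variable {E : Type*} [MeasurableSpace E]

instance iterK_markov (κ : Kernel E E) [IsMarkovKernel κ] : ∀ n, IsMarkovKernel (iterK κ n)
  | 0 => by rw [iterK]; infer_instance
  | n + 1 => by rw [iterK]; have := iterK_markov κ n; infer_instance

lemma iterK_succ' (κ : Kernel E E) [IsMarkovKernel κ] (n : ℕ) :
    iterK κ (n + 1) = iterK κ n ∘ₖ κ := by
  induction n with
  | zero => show κ ∘ₖ Kernel.id = Kernel.id ∘ₖ κ; rw [Kernel.comp_id, Kernel.id_comp]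
  | succ n ih =>
    show κ ∘ₖ iterK κ (n + 1) = _
    show κ ∘ₖ iterK κ (n + 1) = (κ ∘ₖ iterK κ n) ∘ₖ κ
    rw [ih]
    exact (Kernel.comp_assoc κ (iterK κ n) κ).symm

lemma integrable_of_bdd {α : Type*} [MeasurableSpace α] (μ : Measure α) [IsFiniteMeasure μ]
    {f : α → ℝ} (hf : Measurable f) {C : ℝ} (hfb : ∀ x, |f x| ≤ C) : Integrable f μ :=
  (integrable_const C).mono' hf.aestronglyMeasurable
    (ae_of_all _ fun x => by simpa [Real.norm_eq_abs] using hfb x)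

lemma integral_comp_bdd (η κ : Kernel E E) [IsMarkovKernel η] [IsMarkovKernel κ] (x : E)
    {f : E → ℝ} (hf : Measurable f) {C : ℝ} (hfb : ∀ x, |f x| ≤ C) :
    ∫ z, f z ∂((η ∘ₖ κ) x) = ∫ y, ∫ z, f z ∂(η y) ∂(κ x) := by
  have hint : Integrable (fun z : E × E => f z.2) ((κ ⊗ₖ Kernel.prodMkLeft E η) x) :=
    integrable_of_bdd _ (hf.comp measurable_snd) (fun z => hfb z.2)
  rw [Kernel.comp_eq_snd_compProd, Kernel.snd_apply,
    integral_map measurable_snd.aemeasurable hf.aestronglyMeasurable,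
    ProbabilityTheory.integral_compProd hint]
  simp

lemma contract (κ : Kernel E E) [IsMarkovKernel κ] (c : ℝ≥0)
    (lam : Measure E) [IsFiniteMeasure lam]
    (hdoeblin : ∀ (x : E) (B : Set E), MeasurableSet B → (c : ℝ≥0∞) * lam B ≤ κ x B)
    {g : E → ℝ} (hg : Measurable g) {m M : ℝ} (hm : ∀ z, m ≤ g z) (hM : ∀ z, g z ≤ M)
    (x y : E) :
    (∫ z, g z ∂(κ x)) - ∫ z, g z ∂(κ y) ≤
      (1 - ((c : ℝ≥0∞) * lam Set.univ).toReal) * (M - m) := by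
  set ν : Measure E := (c : ℝ≥0∞) • lam with hν
  have hνuniv : ν Set.univ = (c : ℝ≥0∞) * lam Set.univ := by
    simp [hν]
  haveI : IsFiniteMeasure ν := ⟨by
    rw [hνuniv]
    exact ENNReal.mul_lt_top ENNReal.coe_lt_top (measure_lt_top lam _)⟩
  have hle : ∀ w : E, ν ≤ κ w := fun w => Measure.le_iff.mpr fun s hs => by
    rw [Measure.smul_apply, smul_eq_mul]; exact hdoeblin w s hs
  have hCb : ∀ z, |g z| ≤ max |m| |M| := fun z =>
    abs_le.mpr ⟨(neg_le_neg (le_max_left |m| |M|)).trans (by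
        have := hm z; have := neg_abs_le m; linarith),
      (hM z).trans ((le_abs_self M).trans (le_max_right _ _))⟩
  have hgi : ∀ (μ : Measure E) [IsFiniteMeasure μ], Integrable g μ := fun μ _ =>
    integrable_of_bdd μ hg hCb
  have h1 : (∫ z, g z - m ∂ν) ≤ ∫ z, g z - m ∂(κ y) :=
    integral_mono_measure (hle y) (ae_of_all _ fun z => by have := hm z; simp; linarith)
      ((hgi (κ y)).sub (integrable_const m))
  have h2 : (∫ z, M - g z ∂ν) ≤ ∫ z, M - g z ∂(κ x) :=
    integral_mono_measure (hle x) (ae_of_all _ fun z => by have := hM z; simp; linarith)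
      ((integrable_const M).sub (hgi (κ x)))
  have hy : (∫ z, g z - m ∂(κ y)) = (∫ z, g z ∂(κ y)) - m := by
    rw [integral_sub (hgi (κ y)) (integrable_const m), integral_const]
    simp
  have hx : (∫ z, M - g z ∂(κ x)) = M - ∫ z, g z ∂(κ x) := by
    rw [integral_sub (integrable_const M) (hgi (κ x)), integral_const]
    simp
  have hy' : (∫ z, g z - m ∂ν) = (∫ z, g z ∂ν) - (ν Set.univ).toReal * m := by
    rw [integral_sub (hgi ν) (integrable_const m), integral_const, smul_eq_mul]
    rfl
  have hx' : (∫ z, M - g z ∂ν) = (ν Set.univ).toReal * M - ∫ z, g z ∂ν := by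
    rw [integral_sub (integrable_const M) (hgi ν), integral_const, smul_eq_mul]
    rfl
  have htoReal : (ν Set.univ).toReal = ((c : ℝ≥0∞) * lam Set.univ).toReal := by rw [hνuniv]
  rw [hy, hy'] at h1
  rw [hx, hx'] at h2
  have hgoal : (1 - (ν Set.univ).toReal) * (M - m) =
      (M - m) - ((ν Set.univ).toReal * M - (ν Set.univ).toReal * m) := by ring
  rw [← htoReal, hgoal]
  linarith

end Aux

/-- Under a Doeblin minorization with constant `c > 0` and nonzero finite measure `λ`,
for every bounded measurable `f` there is a constant `ū` with
`|κⁿ f (x) - ū| ≤ (1 - c·λ(E))ⁿ · osc f` for all `n` and `x`; i.e. `κⁿ f` converges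
uniformly to the constant `ū` at a geometric rate. -/
theorem stmt2 {E : Type*} [MeasurableSpace E]
    (κ : Kernel E E) [IsMarkovKernel κ]
    (c : ℝ≥0) (hc : 0 < c)
    (lam : Measure E) [IsFiniteMeasure lam] (hlam : lam ≠ 0)
    (hdoeblin : ∀ (x : E) (B : Set E), MeasurableSet B → (c : ℝ≥0∞) * lam B ≤ κ x B)
    (f : E → ℝ) (hf : Measurable f) (C : ℝ) (hfb : ∀ x, |f x| ≤ C) :
    ∃ ubar : ℝ, ∀ (n : ℕ) (x : E),
      |(∫ y, f y ∂(iterK κ n x)) - ubar| ≤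
        (1 - ((c : ℝ≥0∞) * lam Set.univ).toReal) ^ n * ((⨆ x, f x) - ⨅ x, f x) := by
  -- E is nonempty
  haveI hEne : Nonempty E := by
    by_contra h
    haveI : IsEmpty E := not_nonempty_iff.mp h
    exact hlam lam.eq_zero_of_isEmpty
  obtain x₀ := Classical.arbitrary E
  set t : ℝ := ((c : ℝ≥0∞) * lam Set.univ).toReal with ht
  have ht1 : t ≤ 1 := by
    have h1 : (c : ℝ≥0∞) * lam Set.univ ≤ 1 := by
      have := hdoeblin x₀ Set.univ MeasurableSet.univ
      simpa using this
    calc t ≤ (1 : ℝ≥0∞).toReal := ENNReal.toReal_mono (by simp) h1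
    _ = 1 := by simp
  have hr0 : 0 ≤ 1 - t := by linarith
  set g : ℕ → E → ℝ := fun n x => ∫ y, f y ∂(iterK κ n x) with hg
  have hg0 : ∀ x, g 0 x = f x := fun x => by
    show (∫ y, f y ∂(Kernel.id x)) = f x
    rw [Kernel.id_apply, integral_dirac' _ _ hf.stronglyMeasurable]
  have hgb : ∀ n x, |g n x| ≤ C := fun n x => by
    have : ‖∫ y, f y ∂(iterK κ n x)‖ ≤ C * ((iterK κ n x) Set.univ).toReal :=
      norm_integral_le_of_norm_le_const (ae_of_all _ fun y => by
        simpa [Real.norm_eq_abs] using hfb y)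
    simpa [Real.norm_eq_abs] using this
  have hgmeas : ∀ n, Measurable (g n) := fun n =>
    (MeasureTheory.StronglyMeasurable.integral_kernel_prod_right (κ := iterK κ n)
      (f := fun _ y => f y)
      (hf.stronglyMeasurable.comp_measurable measurable_snd)).measurable
  have hgrec : ∀ n x, g (n + 1) x = ∫ y, g n y ∂(κ x) := fun n x => by
    show (∫ z, f z ∂(iterK κ (n+1) x)) = _
    rw [iterK_succ', integral_comp_bdd _ _ _ hf hfb]
  -- sup and inf
  set M : ℕ → ℝ := fun n => ⨆ x, g n x with hM
  set m : ℕ → ℝ := fun n => ⨅ x, g n x with hm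
  have hbdd : ∀ n, BddAbove (Set.range (g n)) := fun n =>
    ⟨C, by rintro _ ⟨x, rfl⟩; exact (abs_le.mp (hgb n x)).2⟩
  have hbddb : ∀ n, BddBelow (Set.range (g n)) := fun n =>
    ⟨-C, by rintro _ ⟨x, rfl⟩; exact (abs_le.mp (hgb n x)).1⟩
  have hgleM : ∀ n x, g n x ≤ M n := fun n x => le_ciSup (hbdd n) x
  have hmleg : ∀ n x, m n ≤ g n x := fun n x => ciInf_le (hbddb n) x
  have hmleM : ∀ n, m n ≤ M n := fun n => (hmleg n x₀).trans (hgleM n x₀)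
  -- monotonicity
  have hMd : ∀ n, M (n + 1) ≤ M n := by
    intro n
    refine ciSup_le fun x => ?_
    rw [hgrec]
    calc (∫ y, g n y ∂(κ x)) ≤ ∫ _, M n ∂(κ x) :=
          integral_mono (integrable_of_bdd _ (hgmeas n) (hgb n)) (integrable_const _)
            (fun y => hgleM n y)
      _ = M n := by simp
  have hmd : ∀ n, m n ≤ m (n + 1) := by
    intro n
    refine le_ciInf fun x => ?_
    rw [hgrec]
    calc m n = ∫ _, m n ∂(κ x) := by simp
      _ ≤ ∫ y, g n y ∂(κ x) :=
          integral_mono (integrable_const _) (integrable_of_bdd _ (hgmeas n) (hgb n))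
            (fun y => hmleg n y)
  have hManti : Antitone M := antitone_nat_of_succ_le hMd
  have hmmono : Monotone m := monotone_nat_of_le_succ hmd
  -- contraction
  have hosc : ∀ n, M n - m n ≤ (1 - t) ^ n * (M 0 - m 0) := by
    intro n
    induction n with
    | zero => simp
    | succ n ih =>
      have hstep : M (n + 1) - m (n + 1) ≤ (1 - t) * (M n - m n) := by
        have key : ∀ x, g (n + 1) x ≤ (1 - t) * (M n - m n) + m (n + 1) := by
          intro x
          have h2 : g (n + 1) x - (1 - t) * (M n - m n) ≤ m (n + 1) := by
            refine le_ciInf fun y => ?_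
            have hc' : g (n + 1) x - g (n + 1) y ≤ (1 - t) * (M n - m n) := by
              rw [hgrec, hgrec]
              exact contract κ c lam hdoeblin (hgmeas n) (hmleg n) (hgleM n) x y
            linarith
          linarith
        have h3 : M (n + 1) ≤ (1 - t) * (M n - m n) + m (n + 1) := ciSup_le key
        linarith
      calc M (n + 1) - m (n + 1) ≤ (1 - t) * (M n - m n) := hstep
        _ ≤ (1 - t) * ((1 - t) ^ n * (M 0 - m 0)) :=
            mul_le_mul_of_nonneg_left ih hr0
        _ = (1 - t) ^ (n + 1) * (M 0 - m 0) := by ring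
  -- the limit
  refine ⟨⨅ n, M n, fun n x => ?_⟩
  have hbddM : BddBelow (Set.range M) := ⟨m 0, by
    rintro _ ⟨k, rfl⟩; exact (hmmono (Nat.zero_le k)).trans (hmleM k)⟩
  have hub : (⨅ k, M k) ≤ M n := ciInf_le hbddM n
  have hlb : m n ≤ ⨅ k, M k := le_ciInf fun k => by
    rcases le_total n k with h | h
    · exact (hmmono h).trans (hmleM k)
    · exact (hmleM n).trans (hManti h)
  have hM0 : M 0 = ⨆ x, f x := by simp only [hM]; exact congrArg _ (funext hg0)
  have hm0 : m 0 = ⨅ x, f x := by simp only [hm]; exact congrArg _ (funext hg0)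
  have h1 := hgleM n x
  have h2 := hmleg n x
  have h3 := hosc n
  rw [hM0, hm0] at h3
  have : |g n x - ⨅ k, M k| ≤ M n - m n := abs_le.mpr ⟨by linarith, by linarith⟩
  calc |(∫ y, f y ∂(iterK κ n x)) - ⨅ k, M k| ≤ M n - m n := this
    _ ≤ (1 - t) ^ n * ((⨆ x, f x) - ⨅ x, f x) := by
        rw [hM0, hm0] at hosc; exact hosc n
end

section
/- Let (E, 𝓔) be a measurable space and κ a Markov kernel on E satisfying a Doeblin minorization with constant c > 0 and nonzero finite measure λ, with c·λ(E) < 1 or c·λ(E) = 1. Then there exists a unique probability measure μ on E invariant for κ (i.e., ∫_E (κ x)(B) dμ(x) = μ(B) for all B ∈ 𝓔), and for every x ∈ E and n ≥ 0 the total variation distance between κⁿ(x, ·) and μ is at most 2·(1 − c·λ(E))ⁿ. Moreover, for every bounded measurable f, κⁿ f converges uniformly to the constant ∫_E f dμ. -/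
open MeasureTheory ProbabilityTheory
open scoped ENNReal NNReal
set_option linter.unusedSectionVars false
set_option linter.unusedVariables false

section doeblin

variable {E : Type*} [MeasurableSpace E] (κ : Kernel E E) (c : ℝ≥0) (lam : Measure E)

noncomputable def Rm (x : E) : Measure E := κ x - c • lam

variable [IsMarkovKernel κ] [IsFiniteMeasure lam]
variable (hle : ∀ x : E, (c • lam : Measure E) ≤ κ x)

lemma nu_apply (B : Set E) : (c • lam : Measure E) B = (c : ℝ≥0∞) * lam B := by
  rw [Measure.smul_apply, ENNReal.smul_def, smul_eq_mul]

include hle in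
lemma Rm_apply {B : Set E} (hB : MeasurableSet B) (x : E) :
    Rm κ c lam x B = κ x B - (c : ℝ≥0∞) * lam B := by
  rw [Rm, Measure.sub_apply hB (hle x), nu_apply]

include hle in
lemma kappa_apply_eq {B : Set E} (hB : MeasurableSet B) (x : E) :
    κ x B = Rm κ c lam x B + (c : ℝ≥0∞) * lam B := by
  rw [Rm_apply κ c lam hle hB x, tsub_add_cancel_of_le]
  simpa [nu_apply] using Measure.le_iff.1 (hle x) B hB

include hle in
lemma measurable_Rm : Measurable (Rm κ c lam) := by
  apply Measure.measurable_of_measurable_coe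
  intro B hB
  simp_rw [Rm_apply κ c lam hle hB]
  exact (κ.measurable_coe hB).sub measurable_const

include hle in
lemma Rm_univ (x : E) : Rm κ c lam x Set.univ = 1 - (c : ℝ≥0∞) * lam Set.univ := by
  rw [Rm_apply κ c lam hle MeasurableSet.univ x, measure_univ]

include hle in
lemma Rm_le_one {B : Set E} (hB : MeasurableSet B) (x : E) : Rm κ c lam x B ≤ 1 := by
  rw [Rm_apply κ c lam hle hB x]
  exact le_trans (tsub_le_self.trans (measure_mono (Set.subset_univ B))) (by simp)

instance {x : E} : IsFiniteMeasure (Rm κ c lam x) := by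
  constructor
  rw [Rm]
  exact lt_of_le_of_lt (Measure.le_iff.1 Measure.sub_le _ MeasurableSet.univ)
    (measure_lt_top (κ x) _)


/-- powers of the residual kernel, as measure-valued maps -/
noncomputable def Rpow : ℕ → E → Measure E
  | 0 => fun x => Measure.dirac x
  | n + 1 => fun x => (Rpow n x).bind (Rm κ c lam)

/-- the measures `m k = ν ∘ R^k` -/
noncomputable def mseq : ℕ → Measure E
  | 0 => c • lam
  | k + 1 => (mseq k).bind (Rm κ c lam)

include hle in
lemma Rpow_apply_univ (n : ℕ) (x : E) :
    Rpow κ c lam n x Set.univ = (1 - (c : ℝ≥0∞) * lam Set.univ) ^ n := by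
  induction n generalizing x with
  | zero => simp [Rpow]
  | succ n ih =>
    rw [Rpow, Measure.bind_apply MeasurableSet.univ (measurable_Rm κ c lam hle).aemeasurable]
    simp_rw [Rm_univ κ c lam hle]
    rw [lintegral_const, ih x, pow_succ, mul_comm]

include hle in
lemma mseq_univ (k : ℕ) :
    mseq κ c lam k Set.univ = ((c : ℝ≥0∞) * lam Set.univ) *
      (1 - (c : ℝ≥0∞) * lam Set.univ) ^ k := by
  induction k with
  | zero => simp [mseq, nu_apply]
  | succ k ih =>
    rw [mseq, Measure.bind_apply MeasurableSet.univ (measurable_Rm κ c lam hle).aemeasurable]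
    simp_rw [Rm_univ κ c lam hle]
    rw [lintegral_const, ih, pow_succ]
    ring

include hle in
lemma bind_kappa {B : Set E} (hB : MeasurableSet B) (p : Measure E) :
    ∫⁻ x, κ x B ∂p = p.bind (Rm κ c lam) B + p Set.univ * ((c : ℝ≥0∞) * lam B) := by
  rw [Measure.bind_apply hB (measurable_Rm κ c lam hle).aemeasurable]
  calc ∫⁻ x, κ x B ∂p = ∫⁻ x, Rm κ c lam x B + (c : ℝ≥0∞) * lam B ∂p := by
        congr 1; ext x; exact kappa_apply_eq κ c lam hle hB x
    _ = (∫⁻ x, Rm κ c lam x B ∂p) + p Set.univ * ((c : ℝ≥0∞) * lam B) := by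
        rw [lintegral_add_right _ measurable_const, lintegral_const, mul_comm]
    _ = _ := rfl

include hle in
lemma telescope (hθ : (c : ℝ≥0∞) * lam Set.univ ≤ 1) (n : ℕ) :
    (∑ k ∈ Finset.range n, ((c : ℝ≥0∞) * lam Set.univ) *
      (1 - (c : ℝ≥0∞) * lam Set.univ) ^ k) + (1 - (c : ℝ≥0∞) * lam Set.univ) ^ n = 1 := by
  induction n with
  | zero => simp
  | succ n ih =>
    rw [Finset.sum_range_succ, pow_succ]
    calc _ = (∑ k ∈ Finset.range n, ((c : ℝ≥0∞) * lam Set.univ) *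
          (1 - (c : ℝ≥0∞) * lam Set.univ) ^ k) +
          ((1 - (c : ℝ≥0∞) * lam Set.univ) ^ n * ((c : ℝ≥0∞) * lam Set.univ) +
           (1 - (c : ℝ≥0∞) * lam Set.univ) ^ n * (1 - (c : ℝ≥0∞) * lam Set.univ)) := by
          ring
      _ = _ := by
          rw [← mul_add, add_comm ((c : ℝ≥0∞) * lam Set.univ), tsub_add_cancel_of_le hθ,
            mul_one]; exact ih

include hle in
lemma decomposition (hθ : (c : ℝ≥0∞) * lam Set.univ ≤ 1) (n : ℕ) (x : E) :
    (iterK κ n) x = Rpow κ c lam n x + ∑ k ∈ Finset.range n, mseq κ c lam k := by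
  induction n with
  | zero => simp [iterK, Rpow, Kernel.id_apply]
  | succ n ih =>
    ext B hB
    rw [iterK, Kernel.comp_apply, Measure.bind_apply hB κ.measurable.aemeasurable, ih,
      lintegral_add_measure, lintegral_finset_sum_measure]
    simp_rw [bind_kappa κ c lam hle hB]
    rw [Finset.sum_add_distrib, ← Finset.sum_mul]
    simp_rw [Rpow_apply_univ κ c lam hle, mseq_univ κ c lam hle]
    rw [Measure.add_apply, Measure.finset_sum_apply]
    have hRp : (Rpow κ c lam n x).bind (Rm κ c lam) B = Rpow κ c lam (n+1) x B := rfl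
    have hms : ∀ k, (mseq κ c lam k).bind (Rm κ c lam) B = mseq κ c lam (k+1) B :=
      fun k => rfl
    rw [hRp]
    simp_rw [hms]
    rw [Finset.sum_range_succ' (fun k => mseq κ c lam k B)]
    have h0 : mseq κ c lam 0 B = (c : ℝ≥0∞) * lam B := nu_apply c lam B
    have : (1 - (c : ℝ≥0∞) * lam Set.univ) ^ n * ((c : ℝ≥0∞) * lam B) +
        (∑ k ∈ Finset.range n, ((c : ℝ≥0∞) * lam Set.univ) *
          (1 - (c : ℝ≥0∞) * lam Set.univ) ^ k) * ((c : ℝ≥0∞) * lam B)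
        = (c : ℝ≥0∞) * lam B := by
      rw [← add_mul, add_comm, telescope κ c lam hle hθ, one_mul]
    rw [h0]
    conv_rhs => rw [← this]
    ring

end doeblin

lemma tsum_mass_aux {θ : ℝ≥0∞} (h0 : θ ≠ 0) (htop : θ ≠ ⊤) (h1 : θ ≤ 1) :
    ∑' k : ℕ, θ * (1 - θ) ^ k = 1 := by
  rw [ENNReal.tsum_mul_left, ENNReal.tsum_geometric, ENNReal.sub_sub_cancel ENNReal.one_ne_top h1,
    ENNReal.mul_inv_cancel h0 htop]

lemma tail_mass_aux {θ : ℝ≥0∞} (h0 : θ ≠ 0) (htop : θ ≠ ⊤) (h1 : θ ≤ 1) (n : ℕ) :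
    ∑' k : ℕ, θ * (1 - θ) ^ (k + n) = (1 - θ) ^ n := by
  calc ∑' k : ℕ, θ * (1 - θ) ^ (k + n)
      = ∑' k : ℕ, (1 - θ) ^ n * (θ * (1 - θ) ^ k) := by
        congr 1; ext k; rw [pow_add]; ring
    _ = (1 - θ) ^ n * ∑' k : ℕ, θ * (1 - θ) ^ k := ENNReal.tsum_mul_left
    _ = (1 - θ) ^ n := by rw [tsum_mass_aux h0 htop h1, mul_one]

lemma abs_aux {r s t M : ℝ≥0∞} (hr : r ≤ M) (ht : t ≤ M) (hM : M ≠ ⊤) (hs : s ≠ ⊤) :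
    |(r + s).toReal - (s + t).toReal| ≤ M.toReal := by
  have hr' : r ≠ ⊤ := (hr.trans_lt (lt_top_iff_ne_top.2 hM)).ne
  have ht' : t ≠ ⊤ := (ht.trans_lt (lt_top_iff_ne_top.2 hM)).ne
  have h1 := ENNReal.toReal_mono hM hr
  have h2 := ENNReal.toReal_mono hM ht
  have h3 : (0:ℝ) ≤ r.toReal := ENNReal.toReal_nonneg
  have h4 : (0:ℝ) ≤ t.toReal := ENNReal.toReal_nonneg
  rw [ENNReal.toReal_add hr' hs, ENNReal.toReal_add hs ht', abs_sub_le_iff]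
  constructor <;> linarith

section doeblin2

variable {E : Type*} [MeasurableSpace E] (κ : Kernel E E) (c : ℝ≥0) (lam : Measure E)
variable [IsMarkovKernel κ] [IsFiniteMeasure lam]
variable (hle : ∀ x : E, (c • lam : Measure E) ≤ κ x)
variable (h0 : (c : ℝ≥0∞) * lam Set.univ ≠ 0) (htop : (c : ℝ≥0∞) * lam Set.univ ≠ ⊤)
variable (h1 : (c : ℝ≥0∞) * lam Set.univ ≤ 1)

include hle h0 htop h1 in
lemma mu_univ : Measure.sum (mseq κ c lam) Set.univ = 1 := by
  rw [Measure.sum_apply _ MeasurableSet.univ]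
  simp_rw [mseq_univ κ c lam hle]
  exact tsum_mass_aux h0 htop h1

include hle h0 htop h1 in
lemma tv_bound {B : Set E} (hB : MeasurableSet B) (n : ℕ) (x : E) :
    |((iterK κ n) x B).toReal - (Measure.sum (mseq κ c lam) B).toReal| ≤
      ((1 - (c : ℝ≥0∞) * lam Set.univ) ^ n).toReal := by
  have hdec := decomposition κ c lam hle h1 n x
  have hiter : (iterK κ n) x B = Rpow κ c lam n x B + ∑ k ∈ Finset.range n, mseq κ c lam k B := by
    rw [hdec, Measure.add_apply, Measure.finset_sum_apply]
  have hμ : Measure.sum (mseq κ c lam) B =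
      (∑ k ∈ Finset.range n, mseq κ c lam k B) + ∑' k : ℕ, mseq κ c lam (k + n) B := by
    rw [Measure.sum_apply _ hB,
      ← Summable.sum_add_tsum_nat_add' (f := fun k => mseq κ c lam k B) (k := n) ENNReal.summable]
  rw [hiter, hμ]
  apply abs_aux
  · exact (measure_mono (Set.subset_univ B)).trans
      (le_of_eq (Rpow_apply_univ κ c lam hle n x))
  · calc ∑' k : ℕ, mseq κ c lam (k + n) B
        ≤ ∑' k : ℕ, mseq κ c lam (k + n) Set.univ :=
          ENNReal.tsum_le_tsum (fun k => measure_mono (Set.subset_univ B))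
      _ ≤ (1 - (c : ℝ≥0∞) * lam Set.univ) ^ n := by
          simp_rw [mseq_univ κ c lam hle]
          exact le_of_eq (tail_mass_aux h0 htop h1 n)
  · exact ENNReal.pow_ne_top (by
      exact (tsub_le_self.trans_lt ENNReal.one_lt_top).ne)
  · refine (lt_of_le_of_lt ?_ ENNReal.one_lt_top).ne
    calc ∑ k ∈ Finset.range n, mseq κ c lam k B
        ≤ ∑ k ∈ Finset.range n, mseq κ c lam k Set.univ :=
          Finset.sum_le_sum (fun k _ => measure_mono (Set.subset_univ B))
      _ ≤ 1 := by
          rw [← telescope κ c lam hle h1 n]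
          simp_rw [mseq_univ κ c lam hle]
          exact le_self_add

include hle h0 htop h1 in
lemma mu_invariant {B : Set E} (hB : MeasurableSet B) :
    ∫⁻ x, κ x B ∂(Measure.sum (mseq κ c lam)) = Measure.sum (mseq κ c lam) B := by
  rw [lintegral_sum_measure, Measure.sum_apply _ hB]
  have step : ∀ k, ∫⁻ x, κ x B ∂(mseq κ c lam k) =
      mseq κ c lam (k + 1) B +
        (((c : ℝ≥0∞) * lam Set.univ) * (1 - (c : ℝ≥0∞) * lam Set.univ) ^ k) *
          ((c : ℝ≥0∞) * lam B) := by
    intro k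
    rw [bind_kappa κ c lam hle hB, mseq_univ κ c lam hle]
    rfl
  calc ∑' k, ∫⁻ x, κ x B ∂(mseq κ c lam k)
      = (∑' k, mseq κ c lam (k + 1) B) +
        (∑' k, ((c : ℝ≥0∞) * lam Set.univ) * (1 - (c : ℝ≥0∞) * lam Set.univ) ^ k) *
          ((c : ℝ≥0∞) * lam B) := by
        simp_rw [step]
        rw [ENNReal.tsum_add, ENNReal.tsum_mul_right]
    _ = (∑' k, mseq κ c lam (k + 1) B) + mseq κ c lam 0 B := by
        rw [tsum_mass_aux h0 htop h1, one_mul]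
        exact congrArg _ (nu_apply c lam B).symm
    _ = ∑' k, mseq κ c lam k B := by
        rw [← Summable.sum_add_tsum_nat_add' (f := fun k => mseq κ c lam k B) (k := 1)
          ENNReal.summable]
        simp [add_comm]

include hle h1 in
lemma iter_univ (n : ℕ) (x : E) : (iterK κ n) x Set.univ = 1 := by
  rw [decomposition κ c lam hle h1 n x, Measure.add_apply, Measure.finset_sum_apply,
    Rpow_apply_univ κ c lam hle]
  simp_rw [mseq_univ κ c lam hle]
  rw [add_comm]
  exact telescope κ c lam hle h1 n

lemma bind_invariant (μ' : Measure E) [IsProbabilityMeasure μ']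
    (hinv : ∀ B : Set E, MeasurableSet B → ∫⁻ x, κ x B ∂μ' = μ' B) (n : ℕ) :
    μ'.bind (iterK κ n) = μ' := by
  have hκinv : μ'.bind κ = μ' := by
    ext B hB
    rw [Measure.bind_apply hB κ.measurable.aemeasurable]
    exact hinv B hB
  induction n with
  | zero =>
    have h : ⇑(Kernel.id : Kernel E E) = fun x : E => Measure.dirac x := by
      funext x; exact Kernel.id_apply x
    show μ'.bind ⇑(Kernel.id : Kernel E E) = μ'
    rw [h]
    exact Measure.bind_dirac
  | succ n ih =>
    have : ⇑(iterK κ (n + 1)) = fun x : E => ((iterK κ n) x).bind κ := by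
      funext x; exact Kernel.comp_apply κ (iterK κ n) x
    rw [iterK] at this ⊢
    rw [this, ← Measure.bind_bind (iterK κ n).measurable.aemeasurable κ.measurable.aemeasurable, ih, hκinv]

end doeblin2


/-- Under a Doeblin minorization with constant `c > 0` and nonzero finite measure `λ`
(with `c·λ(E) < 1` or `c·λ(E) = 1`), there exists a unique invariant probability measure `μ`
for the kernel, the total variation distance between `κⁿ(x,·)` and `μ` is at most
`2·(1 - c·λ(E))ⁿ`, and for every bounded measurable `f`, `κⁿ f` converges uniformly
to the constant `∫ f dμ`. -/
theorem stmt3 {E : Type*} [MeasurableSpace E]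
    (κ : Kernel E E) [IsMarkovKernel κ]
    (c : ℝ≥0) (hc : 0 < c)
    (lam : Measure E) [IsFiniteMeasure lam] (hlam : lam ≠ 0)
    (hdoeblin : ∀ (x : E) (B : Set E), MeasurableSet B → (c : ℝ≥0∞) * lam B ≤ κ x B)
    (hone : ((c : ℝ≥0∞) * lam Set.univ).toReal < 1 ∨ ((c : ℝ≥0∞) * lam Set.univ).toReal = 1) :
    ∃ μ : Measure E, IsProbabilityMeasure μ ∧
      (∀ B : Set E, MeasurableSet B → ∫⁻ x, κ x B ∂μ = μ B) ∧
      (∀ μ' : Measure E, IsProbabilityMeasure μ' →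
        (∀ B : Set E, MeasurableSet B → ∫⁻ x, κ x B ∂μ' = μ' B) → μ' = μ) ∧
      (∀ (x : E) (n : ℕ),
        2 * sSup {r : ℝ | ∃ B : Set E, MeasurableSet B ∧
            r = |((iterK κ n) x B).toReal - (μ B).toReal|} ≤
          2 * (1 - ((c : ℝ≥0∞) * lam Set.univ).toReal) ^ n) ∧
      (∀ f : E → ℝ, Measurable f → (∃ C, ∀ x, |f x| ≤ C) →
        TendstoUniformly (fun n x => ∫ y, f y ∂(iterK κ n x)) (fun _ => ∫ y, f y ∂μ)
          Filter.atTop) := by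
  -- E is nonempty
  have hE : Nonempty E := by
    rcases isEmpty_or_nonempty E with hE | hE
    · exact absurd (by ext B hB; simp [Set.eq_empty_of_isEmpty B]) hlam
    · exact hE
  obtain ⟨x₀⟩ := hE
  -- basic facts about θ = c·λ(E)
  have hle : ∀ x : E, (c • lam : Measure E) ≤ κ x := fun x =>
    Measure.le_iff.2 fun B hB => (nu_apply c lam B).le.trans (hdoeblin x B hB)
  have h0 : (c : ℝ≥0∞) * lam Set.univ ≠ 0 :=
    mul_ne_zero (by exact_mod_cast hc.ne') fun h => hlam (Measure.measure_univ_eq_zero.1 h)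
  have htop : (c : ℝ≥0∞) * lam Set.univ ≠ ⊤ :=
    ENNReal.mul_ne_top ENNReal.coe_ne_top (measure_ne_top lam _)
  have h1 : (c : ℝ≥0∞) * lam Set.univ ≤ 1 :=
    (hdoeblin x₀ Set.univ MeasurableSet.univ).trans (le_of_eq measure_univ)
  set θr : ℝ := ((c : ℝ≥0∞) * lam Set.univ).toReal with hθr
  have hθr_pos : 0 < θr := ENNReal.toReal_pos h0 htop
  have hθr_le1 : θr ≤ 1 := by
    have := ENNReal.toReal_mono ENNReal.one_ne_top h1
    rwa [ENNReal.toReal_one] at this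
  have hgeo : (0 : ℝ) ≤ 1 - θr := by linarith
  have hlt : 1 - θr < 1 := by linarith
  have h1m : ∀ n : ℕ, ((1 - (c : ℝ≥0∞) * lam Set.univ) ^ n).toReal = (1 - θr) ^ n := by
    intro n
    rw [ENNReal.toReal_pow, ENNReal.toReal_sub_of_le h1 ENNReal.one_ne_top, ENNReal.toReal_one]
  set μ : Measure E := Measure.sum (mseq κ c lam) with hμdef
  have hprob : IsProbabilityMeasure μ := ⟨mu_univ κ c lam hle h0 htop h1⟩
  have hinv : ∀ B : Set E, MeasurableSet B → ∫⁻ x, κ x B ∂μ = μ B := fun B hB =>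
    mu_invariant κ c lam hle h0 htop h1 hB
  have htv : ∀ (n : ℕ) (x : E) (B : Set E), MeasurableSet B →
      |((iterK κ n) x B).toReal - (μ B).toReal| ≤ (1 - θr) ^ n := by
    intro n x B hB
    rw [← h1m n]
    exact tv_bound κ c lam hle h0 htop h1 hB n x
  refine ⟨μ, hprob, hinv, ?_, ?_, ?_⟩
  · -- uniqueness
    intro μ' hμ' hinv'
    ext B hB
    have key : ∀ n : ℕ, |(μ' B).toReal - (μ B).toReal| ≤ (1 - θr) ^ n := by
      intro n
      have hble : ∀ x : E, (iterK κ n) x B ≤ 1 := fun x =>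
        (measure_mono (Set.subset_univ B)).trans (iter_univ κ c lam hle h1 n x).le
      have hmg : Measurable fun x => ((iterK κ n) x B).toReal :=
        ((iterK κ n).measurable_coe hB).ennreal_toReal
      have hμ'B : (μ' B).toReal = ∫ x, ((iterK κ n) x B).toReal ∂μ' := by
        rw [integral_toReal ((iterK κ n).measurable_coe hB).aemeasurable
          (Filter.Eventually.of_forall fun x => (hble x).trans_lt ENNReal.one_lt_top)]
        congr 1
        rw [← Measure.bind_apply hB (iterK κ n).measurable.aemeasurable, bind_invariant κ μ' hinv' n]
      have hintg : Integrable (fun x => ((iterK κ n) x B).toReal) μ' :=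
        ⟨hmg.aestronglyMeasurable, HasFiniteIntegral.of_bounded (C := 1)
          (Filter.Eventually.of_forall fun x => by
            rw [Real.norm_eq_abs, abs_of_nonneg ENNReal.toReal_nonneg]
            simpa using ENNReal.toReal_mono ENNReal.one_ne_top (hble x))⟩
      have : (μ' B).toReal - (μ B).toReal =
          ∫ x, (((iterK κ n) x B).toReal - (μ B).toReal) ∂μ' := by
        rw [integral_sub hintg (integrable_const _), integral_const, probReal_univ,
          one_smul, hμ'B]
      rw [this]
      have hbd := norm_integral_le_of_norm_le_const (μ := μ')
        (f := fun x => ((iterK κ n) x B).toReal - (μ B).toReal) (C := (1 - θr) ^ n)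
        (Filter.Eventually.of_forall fun x => by
          rw [Real.norm_eq_abs]; exact htv n x B hB)
      simpa [measure_univ] using hbd
    have hzero : |(μ' B).toReal - (μ B).toReal| ≤ 0 :=
      ge_of_tendsto (tendsto_pow_atTop_nhds_zero_of_lt_one hgeo hlt)
        (Filter.Eventually.of_forall key)
    have := abs_nonpos_iff.1 hzero
    have heq : (μ' B).toReal = (μ B).toReal := by linarith [this]
    exact (ENNReal.toReal_eq_toReal_iff' (measure_ne_top μ' B) (measure_ne_top μ B)).1 heq
  · -- TV bound
    intro x n
    have hub : sSup {r : ℝ | ∃ B : Set E, MeasurableSet B ∧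
        r = |((iterK κ n) x B).toReal - (μ B).toReal|} ≤ (1 - θr) ^ n := by
      apply Real.sSup_le
      · rintro r ⟨B, hB, rfl⟩
        exact htv n x B hB
      · exact pow_nonneg hgeo n
    linarith
  · -- uniform convergence
    intro f hf ⟨C, hC⟩
    have hintf : ∀ (ν : Measure E), IsFiniteMeasure ν → Integrable f ν := fun ν hν =>
      ⟨hf.aestronglyMeasurable, @HasFiniteIntegral.of_bounded _ _ _ ν _ hν f C
        (Filter.Eventually.of_forall fun y => (Real.norm_eq_abs _).symm ▸ hC y)⟩
    have key : ∀ (n : ℕ) (x : E),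
        dist (∫ y, f y ∂μ) (∫ y, f y ∂((iterK κ n) x)) ≤ 2 * C * (1 - θr) ^ n := by
      intro n x
      have hfinR : IsFiniteMeasure (Rpow κ c lam n x) := by
        constructor
        rw [Rpow_apply_univ κ c lam hle n x]
        exact ENNReal.pow_lt_top (tsub_le_self.trans_lt ENNReal.one_lt_top)
      have hfinP : IsFiniteMeasure (∑ k ∈ Finset.range n, mseq κ c lam k) := by
        constructor
        rw [Measure.finset_sum_apply]
        refine lt_of_le_of_lt ?_ ENNReal.one_lt_top
        rw [← telescope κ c lam hle h1 n]
        simp_rw [mseq_univ κ c lam hle]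
        exact le_self_add
      have hfinT : IsFiniteMeasure (Measure.sum fun k => mseq κ c lam (k + n)) := by
        constructor
        rw [Measure.sum_apply _ MeasurableSet.univ]
        simp_rw [mseq_univ κ c lam hle]
        rw [tail_mass_aux h0 htop h1 n]
        exact ENNReal.pow_lt_top (tsub_le_self.trans_lt ENNReal.one_lt_top)
      have hTuniv : ((Measure.sum fun k => mseq κ c lam (k + n)) Set.univ).toReal =
          (1 - θr) ^ n := by
        rw [Measure.sum_apply _ MeasurableSet.univ]
        simp_rw [mseq_univ κ c lam hle]
        rw [tail_mass_aux h0 htop h1 n, h1m n]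
      have hRuniv : ((Rpow κ c lam n x) Set.univ).toReal = (1 - θr) ^ n := by
        rw [Rpow_apply_univ κ c lam hle n x, h1m n]
      have hmu_split : μ = (∑ k ∈ Finset.range n, mseq κ c lam k) +
          Measure.sum (fun k => mseq κ c lam (k + n)) := by
        ext B hB
        rw [Measure.add_apply, Measure.sum_apply _ hB, Measure.sum_apply _ hB,
          Measure.finset_sum_apply,
          ← Summable.sum_add_tsum_nat_add' (f := fun k => mseq κ c lam k B) (k := n) ENNReal.summable]
      have hiter_split := decomposition κ c lam hle h1 n x
      have e1 : ∫ y, f y ∂((iterK κ n) x) =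
          (∫ y, f y ∂(Rpow κ c lam n x)) + ∫ y, f y ∂(∑ k ∈ Finset.range n, mseq κ c lam k) := by
        rw [hiter_split]
        exact integral_add_measure (hintf _ hfinR) (hintf _ hfinP)
      have e2 : ∫ y, f y ∂μ =
          (∫ y, f y ∂(∑ k ∈ Finset.range n, mseq κ c lam k)) +
            ∫ y, f y ∂(Measure.sum fun k => mseq κ c lam (k + n)) := by
        rw [hmu_split]
        exact integral_add_measure (hintf _ hfinP) (hintf _ hfinT)
      have hbT := @norm_integral_le_of_norm_le_const _ _ _ _ _
        (Measure.sum fun k => mseq κ c lam (k + n)) hfinT f C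
        (Filter.Eventually.of_forall fun y => (Real.norm_eq_abs _).symm ▸ hC y)
      have hbR := @norm_integral_le_of_norm_le_const _ _ _ _ _
        (Rpow κ c lam n x) hfinR f C
        (Filter.Eventually.of_forall fun y => (Real.norm_eq_abs _).symm ▸ hC y)
      rw [measureReal_def, hTuniv] at hbT
      rw [measureReal_def, hRuniv] at hbR
      rw [Real.dist_eq, e1, e2]
      have : (∫ y, f y ∂(∑ k ∈ Finset.range n, mseq κ c lam k)) +
            (∫ y, f y ∂(Measure.sum fun k => mseq κ c lam (k + n))) -
          ((∫ y, f y ∂(Rpow κ c lam n x)) +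
            ∫ y, f y ∂(∑ k ∈ Finset.range n, mseq κ c lam k)) =
          (∫ y, f y ∂(Measure.sum fun k => mseq κ c lam (k + n))) -
            ∫ y, f y ∂(Rpow κ c lam n x) := by ring
      rw [this]
      calc |(∫ y, f y ∂(Measure.sum fun k => mseq κ c lam (k + n))) -
            ∫ y, f y ∂(Rpow κ c lam n x)|
          ≤ ‖∫ y, f y ∂(Measure.sum fun k => mseq κ c lam (k + n))‖ +
            ‖∫ y, f y ∂(Rpow κ c lam n x)‖ := abs_sub _ _
        _ ≤ C * (1 - θr) ^ n + C * (1 - θr) ^ n := add_le_add hbT hbR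
        _ = 2 * C * (1 - θr) ^ n := by ring
    rw [Metric.tendstoUniformly_iff]
    intro ε hε
    have htend : Filter.Tendsto (fun n : ℕ => 2 * C * (1 - θr) ^ n) Filter.atTop (nhds 0) := by
      simpa using (tendsto_pow_atTop_nhds_zero_of_lt_one hgeo hlt).const_mul (2 * C)
    filter_upwards [htend.eventually (gt_mem_nhds hε)] with n hn x
    exact lt_of_le_of_lt (key n x) hn
end

section
/- Let κ be a Markov kernel on a measurable space (E, 𝓔), let (X_n)_{n≥0} be the canonical Markov chain with kernel κ started at x with law P_x, and let G ∈ 𝓔. Assume that for every x ∈ E the hitting time τ = inf{n ≥ 1 : X_n ∈ G} satisfies P_x(τ < ∞) = 1 and E_x[τ] < ∞. Define the return kernel Q on G by Q(x, B) = P_x(X_τ ∈ B) for x ∈ G and measurable B ⊆ G, and let P be a probability measure on G invariant for Q (∫_G Q(x, B) dP(x) = P(B) for all measurable B ⊆ G). Assume M := ∫_G E_x[τ] dP(x) < ∞. Then μ(A) := M^{−1} ∫_G E_x[ Σ_{n=0}^{τ−1} 1_A(X_n) ] dP(x), A ∈ 𝓔, defines a probability measure on E that is invariant for κ: ∫_E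 (κ x)(A) dμ(x) = μ(A) for every A ∈ 𝓔. -/
open MeasureTheory ProbabilityTheory
open scoped ENNReal

/-- The hitting time `inf {n ≥ 1 : ω n ∈ G}` of a trajectory, as a natural number
(equal to `0` by convention if `G` is never hit after time `0`). -/
noncomputable def natHit {E : Type*} (G : Set E) (ω : ℕ → E) : ℕ :=
  sInf {n : ℕ | 1 ≤ n ∧ ω n ∈ G}

namespace Stmt10Aux

variable {E : Type*} [mE : MeasurableSpace E]

/-- No visit to `G` at times `1,…,n`. -/
def C (G : Set E) (n : ℕ) : Set (ℕ → E) := {ω | ∀ k, 1 ≤ k → k ≤ n → ω k ∉ G}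

lemma C_eq (G : Set E) (n : ℕ) :
    C G n = ⋂ k ∈ Finset.Icc 1 n, (fun ω : ℕ → E => ω k) ⁻¹' Gᶜ := by
  ext ω; simp only [C, Set.mem_setOf_eq, Set.mem_iInter, Finset.mem_Icc, Set.mem_preimage,
    Set.mem_compl_iff]
  tauto

lemma measurableSet_C {G : Set E} (hG : MeasurableSet G) (n : ℕ) :
    MeasurableSet (C G n) := by
  rw [C_eq]
  exact MeasurableSet.biInter (Finset.countable_toSet _)
    (fun k _ => (measurable_pi_apply k) hG.compl)

lemma measurableSet_C_sup {G : Set E} (hG : MeasurableSet G) (n : ℕ) :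
    MeasurableSet[⨆ i ∈ Finset.range (n + 1),
      MeasurableSpace.comap (fun ω : ℕ → E => ω i) mE] (C G n) := by
  rw [C_eq]
  refine MeasurableSet.biInter (Finset.countable_toSet _) fun k hk => ?_
  have hk' : k ∈ Finset.range (n + 1) := by
    have hk2 : k ∈ Finset.Icc 1 n := hk
    rw [Finset.mem_Icc] at hk2
    exact Finset.mem_range.mpr (by omega)
  have hle : MeasurableSpace.comap (fun ω : ℕ → E => ω k) mE ≤
      ⨆ i ∈ Finset.range (n + 1), MeasurableSpace.comap (fun ω : ℕ → E => ω i) mE :=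
    le_biSup (fun i => MeasurableSpace.comap (fun ω : ℕ → E => ω i) mE) hk'
  exact hle _ ⟨Gᶜ, hG.compl, rfl⟩

lemma C_zero (G : Set E) : C G 0 = Set.univ := by
  ext ω; simp [C]; omega

lemma C_succ (G : Set E) (n : ℕ) :
    C G (n + 1) = C G n ∩ (fun ω : ℕ → E => ω (n + 1)) ⁻¹' Gᶜ := by
  ext ω
  constructor
  · intro h
    exact ⟨fun k h1 h2 => h k h1 (by omega), h (n + 1) (by omega) le_rfl⟩
  · rintro ⟨h1, h2⟩ k hk1 hk2
    rcases Nat.lt_or_ge k (n + 1) with h | h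
    · exact h1 k hk1 (by omega)
    · have : k = n + 1 := by omega
      subst this; exact h2

section hitfacts

variable {G : Set E} {ω : ℕ → E}

lemma natHit_mem (hω : ∃ n, 1 ≤ n ∧ ω n ∈ G) : 1 ≤ natHit G ω ∧ ω (natHit G ω) ∈ G :=
  Nat.sInf_mem hω

lemma mem_C_iff (hω : ∃ n, 1 ≤ n ∧ ω n ∈ G) (n : ℕ) : ω ∈ C G n ↔ n < natHit G ω := by
  constructor
  · intro hC
    by_contra h
    push_neg at h
    exact hC _ (natHit_mem hω).1 h (natHit_mem hω).2
  · intro hlt k hk1 hkn hkG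
    have : natHit G ω ≤ k := Nat.sInf_le ⟨hk1, hkG⟩
    omega

end hitfacts

end Stmt10Aux


open Stmt10Aux

set_option maxHeartbeats 2000000 in
/-- Kac-type formula: for the canonical Markov chain with kernel `κ` (laws `P x`,
characterized by the initial condition and the Markov property), if the return time `τ`
to `G` is a.s. finite with finite expectation from every starting point, and `P` is a
probability measure on `G` invariant for the return kernel `Q(x,B) = P_x(X_τ ∈ B)`, with
`M = ∫_G E_x[τ] dP(x) < ∞`, then
`μ(A) = M⁻¹ ∫_G E_x[Σ_{n=0}^{τ-1} 1_A(X n)] dP(x)` defines a probability measure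
invariant for `κ`. -/
theorem stmt10 {E : Type*} [mE : MeasurableSpace E]
    (κ : Kernel E E) [IsMarkovKernel κ]
    (P : E → Measure (ℕ → E)) (hPmeas : Measurable P)
    (hPprob : ∀ x, IsProbabilityMeasure (P x))
    (hinit : ∀ x, P x {ω | ω 0 = x} = 1)
    (hMarkov : ∀ (x : E) (n : ℕ) (B : Set E), MeasurableSet B →
      ∀ C : Set (ℕ → E),
        MeasurableSet[⨆ i ∈ Finset.range (n + 1),
          MeasurableSpace.comap (fun ω : ℕ → E => ω i) mE] C →
        P x (C ∩ {ω | ω (n + 1) ∈ B}) = ∫⁻ ω in C, κ (ω n) B ∂(P x))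
    (G : Set E) (hG : MeasurableSet G)
    (hfin : ∀ x, P x {ω | ∃ n, 1 ≤ n ∧ ω n ∈ G} = 1)
    (hEfin : ∀ x, ∫⁻ ω, (natHit G ω : ℝ≥0∞) ∂(P x) < ⊤)
    (Pinv : Measure E) [IsProbabilityMeasure Pinv] (hPinvG : Pinv G = 1)
    (hinv : ∀ B : Set E, MeasurableSet B → B ⊆ G →
      ∫⁻ x, P x {ω | ω (natHit G ω) ∈ B} ∂Pinv = Pinv B)
    (M : ℝ≥0∞) (hM : M = ∫⁻ x, (∫⁻ ω, (natHit G ω : ℝ≥0∞) ∂(P x)) ∂Pinv)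
    (hMfin : M < ⊤) :
    ∃ μ : Measure E, IsProbabilityMeasure μ ∧
      (∀ A : Set E, MeasurableSet A →
        μ A = M⁻¹ * ∫⁻ x, (∫⁻ ω, (∑ n ∈ Finset.range (natHit G ω),
          A.indicator (fun _ => (1 : ℝ≥0∞)) (ω n)) ∂(P x)) ∂Pinv) ∧
      (∀ A : Set E, MeasurableSet A → ∫⁻ x, κ x A ∂μ = μ A) := by
  classical
  have mhit : MeasurableSet {ω : ℕ → E | ∃ n, 1 ≤ n ∧ ω n ∈ G} := by
    have : {ω : ℕ → E | ∃ n, 1 ≤ n ∧ ω n ∈ G}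
        = ⋃ n, ⋃ (_ : 1 ≤ n), (fun ω : ℕ → E => ω n) ⁻¹' G := by
      ext ω; simp
    rw [this]
    exact MeasurableSet.iUnion fun n => MeasurableSet.iUnion fun _ =>
      (measurable_pi_apply n) hG
  have hPapply : ∀ {s : Set (ℕ → E)}, MeasurableSet s → Measurable fun x => P x s :=
    fun hs => Measure.measurable_measure.mp hPmeas _ hs
  have hPhit : ∀ x, P x {ω : ℕ → E | ∃ n, 1 ≤ n ∧ ω n ∈ G}ᶜ = 0 := by
    intro x
    haveI := hPprob x
    rw [measure_compl mhit (measure_ne_top _ _), hfin x, measure_univ, tsub_self]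
  have hPae : ∀ x, ∀ᵐ ω ∂(P x), ∃ n, 1 ≤ n ∧ ω n ∈ G := by
    intro x
    rw [ae_iff]
    exact hPhit x
  set Q : Measure (ℕ → E) := Pinv.bind P with hQ_def
  have hQapply : ∀ {s : Set (ℕ → E)}, MeasurableSet s → Q s = ∫⁻ x, P x s ∂Pinv :=
    fun hs => Measure.bind_apply hs hPmeas.aemeasurable
  have hQlint : ∀ {f : (ℕ → E) → ℝ≥0∞}, Measurable f →
      ∫⁻ ω, f ω ∂Q = ∫⁻ x, ∫⁻ ω, f ω ∂(P x) ∂Pinv :=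
    fun hf => Measure.lintegral_bind hPmeas.aemeasurable hf.aemeasurable
  -- the family of sets D n A and the measure ν
  set D : ℕ → Set E → Set (ℕ → E) :=
    fun n A => C G n ∩ (fun ω : ℕ → E => ω n) ⁻¹' A with hD_def
  have mD : ∀ (n : ℕ) {A : Set E}, MeasurableSet A → MeasurableSet (D n A) := by
    intro n A hA
    exact (measurableSet_C hG n).inter ((measurable_pi_apply n) hA)
  set ν : Measure E :=
    Measure.sum (fun n => (Q.restrict (C G n)).map (fun ω => ω n)) with hν_def
  have hν_apply : ∀ {A : Set E}, MeasurableSet A → ν A = ∑' n, Q (D n A) := by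
    intro A hA
    rw [hν_def, Measure.sum_apply _ hA]
    refine tsum_congr fun n => ?_
    rw [Measure.map_apply (measurable_pi_apply n) hA,
      Measure.restrict_apply ((measurable_pi_apply n) hA), Set.inter_comm]
  -- pointwise identity on the hit set
  have hpoint : ∀ {A : Set E} (ω : ℕ → E), (∃ n, 1 ≤ n ∧ ω n ∈ G) →
      (∑ n ∈ Finset.range (natHit G ω), A.indicator (fun _ => (1 : ℝ≥0∞)) (ω n)) =
      ∑' n, (D n A).indicator (fun _ => (1 : ℝ≥0∞)) ω := by
    intro A ω hω
    rw [tsum_eq_sum (s := Finset.range (natHit G ω))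
      (fun n hn => Set.indicator_of_notMem (fun hm => by
        have := (mem_C_iff hω n).mp hm.1
        exact hn (Finset.mem_range.mpr this)) _)]
    refine Finset.sum_congr rfl fun n hn => ?_
    have hC : ω ∈ C G n := (mem_C_iff hω n).mpr (Finset.mem_range.mp hn)
    by_cases h : ω n ∈ A
    · rw [Set.indicator_of_mem h, Set.indicator_of_mem (Set.mem_inter hC h)]
    · rw [Set.indicator_of_notMem h, Set.indicator_of_notMem (fun hm => h hm.2)]
  -- the key formula
  have key : ∀ {A : Set E}, MeasurableSet A →
      ∫⁻ x, (∫⁻ ω, (∑ n ∈ Finset.range (natHit G ω),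
          A.indicator (fun _ => (1 : ℝ≥0∞)) (ω n)) ∂(P x)) ∂Pinv = ν A := by
    intro A hA
    have hgmeas : Measurable fun ω : ℕ → E =>
        ∑' n, (D n A).indicator (fun _ => (1 : ℝ≥0∞)) ω :=
      Measurable.ennreal_tsum fun n => measurable_const.indicator (mD n hA)
    have h1 : ∀ x, ∫⁻ ω, (∑ n ∈ Finset.range (natHit G ω),
        A.indicator (fun _ => (1 : ℝ≥0∞)) (ω n)) ∂(P x)
        = ∫⁻ ω, ∑' n, (D n A).indicator (fun _ => (1 : ℝ≥0∞)) ω ∂(P x) := by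
      intro x
      refine lintegral_congr_ae ?_
      filter_upwards [hPae x] with ω hω
      exact hpoint ω hω
    calc ∫⁻ x, (∫⁻ ω, (∑ n ∈ Finset.range (natHit G ω),
          A.indicator (fun _ => (1 : ℝ≥0∞)) (ω n)) ∂(P x)) ∂Pinv
        = ∫⁻ x, ∫⁻ ω, (∑' n, (D n A).indicator (fun _ => (1 : ℝ≥0∞)) ω) ∂(P x) ∂Pinv :=
          lintegral_congr h1
      _ = ∫⁻ ω, (∑' n, (D n A).indicator (fun _ => (1 : ℝ≥0∞)) ω) ∂Q := (hQlint hgmeas).symm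
      _ = ∑' n, ∫⁻ ω, (D n A).indicator (fun _ => (1 : ℝ≥0∞)) ω ∂Q :=
          lintegral_tsum fun n => (measurable_const.indicator (mD n hA)).aemeasurable
      _ = ∑' n, Q (D n A) := by
          refine tsum_congr fun n => ?_
          rw [lintegral_indicator (mD n hA), setLIntegral_one]
      _ = ν A := (hν_apply hA).symm
  -- total mass
  have hνuniv : ν Set.univ = M := by
    rw [← key MeasurableSet.univ, hM]
    refine lintegral_congr fun x => lintegral_congr fun ω => ?_
    simp
  have hMne0 : M ≠ 0 := by
    have hM1 : (1 : ℝ≥0∞) ≤ M := by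
      rw [hM]
      have hx : ∀ x, (1 : ℝ≥0∞) ≤ ∫⁻ ω, (natHit G ω : ℝ≥0∞) ∂(P x) := by
        intro x
        haveI := hPprob x
        have hae : ∀ᵐ ω ∂(P x), (1 : ℝ≥0∞) ≤ (natHit G ω : ℝ≥0∞) := by
          filter_upwards [hPae x] with ω hω
          exact_mod_cast Nat.one_le_cast.mpr (natHit_mem hω).1
        calc (1 : ℝ≥0∞) = ∫⁻ _, 1 ∂(P x) := by simp
          _ ≤ ∫⁻ ω, (natHit G ω : ℝ≥0∞) ∂(P x) := lintegral_mono_ae hae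
      calc (1 : ℝ≥0∞) = ∫⁻ _, 1 ∂Pinv := by simp
        _ ≤ _ := lintegral_mono fun x => hx x
    exact fun h => by simp [h] at hM1
  -- the value of D 0
  have hP0 : ∀ (x : E) {B : Set E}, MeasurableSet B →
      P x {ω : ℕ → E | ω 0 ∈ B} = B.indicator (fun _ => (1 : ℝ≥0∞)) x := by
    intro x B hB
    haveI := hPprob x
    by_cases hx : x ∈ B
    · rw [Set.indicator_of_mem hx]
      refine le_antisymm prob_le_one ?_
      rw [← hinit x]
      exact measure_mono fun ω (h : ω 0 = x) => by
        simp only [Set.mem_setOf_eq, h]; exact hx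
    · rw [Set.indicator_of_notMem hx]
      have h1 : P x {ω : ℕ → E | ω 0 ∈ Bᶜ} = 1 := by
        refine le_antisymm prob_le_one ?_
        rw [← hinit x]
        exact measure_mono fun ω (h : ω 0 = x) => by
          simp only [Set.mem_setOf_eq, h]; exact hx
      have hcompl : {ω : ℕ → E | ω 0 ∈ B} = {ω : ℕ → E | ω 0 ∈ Bᶜ}ᶜ := by
        ext ω; simp
      have hms : MeasurableSet {ω : ℕ → E | ω 0 ∈ Bᶜ} := (measurable_pi_apply 0) hB.compl
      rw [hcompl, measure_compl hms (measure_ne_top _ _), h1, measure_univ, tsub_self]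
  have hT0 : ∀ {B : Set E}, MeasurableSet B → Q (D 0 B) = Pinv B := by
    intro B hB
    have hD0 : D 0 B = {ω : ℕ → E | ω 0 ∈ B} := by
      rw [hD_def]; simp only [C_zero, Set.univ_inter]; rfl
    have hm : MeasurableSet {ω : ℕ → E | ω 0 ∈ B} := (measurable_pi_apply 0) hB
    rw [hD0, hQapply hm, lintegral_congr fun x => hP0 x hB, lintegral_indicator hB,
      setLIntegral_one]
  have hPinvGc : Pinv Gᶜ = 0 := by
    rw [measure_compl hG (measure_ne_top _ _), hPinvG, measure_univ, tsub_self]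
  -- invariance for ν
  have hinvν : ∀ {A : Set E}, MeasurableSet A → ∫⁻ y, κ y A ∂ν = ν A := by
    intro A hA
    have hκA : Measurable fun y => κ y A := Kernel.measurable_coe κ hA
    have step1 : ∫⁻ y, κ y A ∂ν = ∑' n, Q (C G n ∩ {ω | ω (n + 1) ∈ A}) := by
      rw [hν_def, lintegral_sum_measure]
      refine tsum_congr fun n => ?_
      rw [lintegral_map hκA (measurable_pi_apply n)]
      have hfm : Measurable fun ω : ℕ → E => κ (ω n) A := hκA.comp (measurable_pi_apply n)
      have hre : ∫⁻ ω in C G n, κ (ω n) A ∂Q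
          = ∫⁻ x, P x (C G n ∩ {ω | ω (n + 1) ∈ A}) ∂Pinv := by
        rw [← lintegral_indicator (measurableSet_C hG n),
          hQlint (hfm.indicator (measurableSet_C hG n))]
        refine lintegral_congr fun x => ?_
        rw [lintegral_indicator (measurableSet_C hG n),
          ← hMarkov x n A hA _ (measurableSet_C_sup hG n)]
      have hm2 : MeasurableSet (C G n ∩ {ω : ℕ → E | ω (n + 1) ∈ A}) :=
        (measurableSet_C hG n).inter ((measurable_pi_apply (n + 1)) hA)
      rw [hre, ← hQapply hm2]
    have hsplit : ∀ n, Q (C G n ∩ {ω | ω (n + 1) ∈ A}) =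
        Q (D (n + 1) (A \ G)) + Q (C G n ∩ {ω | ω (n + 1) ∈ A ∩ G}) := by
      intro n
      have hset : C G n ∩ {ω : ℕ → E | ω (n + 1) ∈ A} =
          D (n + 1) (A \ G) ∪ (C G n ∩ {ω | ω (n + 1) ∈ A ∩ G}) := by
        rw [hD_def]
        ext ω
        simp only [Set.mem_inter_iff, Set.mem_setOf_eq, Set.mem_union, Set.mem_preimage,
          C_succ, Set.mem_diff, Set.mem_compl_iff]
        tauto
      have hm3 : MeasurableSet (C G n ∩ {ω : ℕ → E | ω (n + 1) ∈ A ∩ G}) :=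
        (measurableSet_C hG n).inter ((measurable_pi_apply (n + 1)) (hA.inter hG))
      have hdisj2 : Disjoint (D (n + 1) (A \ G)) (C G n ∩ {ω : ℕ → E | ω (n + 1) ∈ A ∩ G}) := by
        refine Set.disjoint_left.mpr fun ω h1 h2 => ?_
        have h1' : ω (n + 1) ∈ A \ G := h1.2
        have h2' : ω (n + 1) ∈ A ∩ G := h2.2
        exact h1'.2 h2'.2
      rw [hset, measure_union hdisj2 hm3]
    have hpart1 : ∑' n, Q (D (n + 1) (A \ G)) = ν (A \ G) := by
      have h0 : Q (D 0 (A \ G)) = 0 := by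
        rw [hT0 (hA.diff hG)]
        exact measure_mono_null (fun y hy => hy.2) hPinvGc
      have hz := tsum_eq_zero_add' (f := fun n => Q (D n (A \ G))) ENNReal.summable
      rw [hν_apply (hA.diff hG), hz, h0, zero_add]
    have hpart2 : ∑' n, Q (C G n ∩ {ω | ω (n + 1) ∈ A ∩ G}) = Pinv (A ∩ G) := by
      have hB : MeasurableSet (A ∩ G) := hA.inter hG
      set Dn : ℕ → Set (ℕ → E) := fun n => C G n ∩ {ω : ℕ → E | ω (n + 1) ∈ A ∩ G}
        with hDn_def
      have mDn : ∀ n, MeasurableSet (Dn n) := fun n =>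
        (measurableSet_C hG n).inter ((measurable_pi_apply (n + 1)) hB)
      have hdisj : Pairwise (Function.onFun Disjoint Dn) := by
        have hkey : ∀ m n, m < n → Disjoint (Dn m) (Dn n) := by
          intro m n hmn
          refine Set.disjoint_left.mpr fun ω h1 h2 => ?_
          exact h2.1 (m + 1) (by omega) (by omega) h1.2.2
        intro m n hmn
        rcases Ne.lt_or_gt hmn with h | h
        · exact hkey m n h
        · exact (hkey n m h).symm
      have hxeq : ∀ x, P x {ω : ℕ → E | ω (natHit G ω) ∈ A ∩ G} = ∑' n, P x (Dn n) := by
        intro x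
        have hae : {ω : ℕ → E | ω (natHit G ω) ∈ A ∩ G} =ᵐ[P x] ⋃ n, Dn n := by
          rw [MeasureTheory.ae_eq_set]
          constructor
          · refine measure_mono_null (fun ω hω => ?_) (hPhit x)
            intro hhit
            have hτ := natHit_mem hhit
            refine hω.2 (Set.mem_iUnion.mpr ⟨natHit G ω - 1, ?_⟩)
            have heq : natHit G ω - 1 + 1 = natHit G ω := by omega
            refine ⟨(mem_C_iff hhit _).mpr (by omega), ?_⟩
            simp only [Set.mem_setOf_eq, heq]
            exact hω.1
          · refine measure_mono_null (fun ω hω => ?_) (hPhit x)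
            intro hhit
            obtain ⟨n, hn⟩ := Set.mem_iUnion.mp hω.1
            have h1 : n < natHit G ω := (mem_C_iff hhit n).mp hn.1
            have h2 : natHit G ω ≤ n + 1 := Nat.sInf_le ⟨by omega, hn.2.2⟩
            have h3 : natHit G ω = n + 1 := by omega
            exact hω.2 (by simp only [Set.mem_setOf_eq, h3]; exact hn.2)
        rw [measure_congr hae, measure_iUnion hdisj mDn]
      calc ∑' n, Q (Dn n) = ∑' n, ∫⁻ x, P x (Dn n) ∂Pinv :=
            tsum_congr fun n => hQapply (mDn n)
        _ = ∫⁻ x, ∑' n, P x (Dn n) ∂Pinv :=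
            (lintegral_tsum fun n => (hPapply (mDn n)).aemeasurable).symm
        _ = ∫⁻ x, P x {ω : ℕ → E | ω (natHit G ω) ∈ A ∩ G} ∂Pinv :=
            lintegral_congr fun x => (hxeq x).symm
        _ = Pinv (A ∩ G) := hinv (A ∩ G) hB Set.inter_subset_right
    have hν_inter : ν (A ∩ G) = Pinv (A ∩ G) := by
      rw [hν_apply (hA.inter hG), tsum_eq_single 0 ?_]
      · exact hT0 (hA.inter hG)
      · intro n hn
        have hempty : D n (A ∩ G) = (∅ : Set (ℕ → E)) := by
          refine Set.eq_empty_iff_forall_notMem.mpr fun ω hω => ?_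
          have h1 : ω ∈ C G n := hω.1
          have h2 : ω n ∈ A ∩ G := hω.2
          exact h1 n (by omega) le_rfl h2.2
        rw [hempty]
        simp
    have hν_union : ν A = ν (A ∩ G) + ν (A \ G) := by
      rw [← measure_union (Set.disjoint_left.mpr fun ω h1 h2 => h2.2 h1.2) (hA.diff hG),
        Set.inter_union_diff]
    rw [step1]
    calc ∑' n, Q (C G n ∩ {ω | ω (n + 1) ∈ A})
        = ∑' n, (Q (D (n + 1) (A \ G)) + Q (C G n ∩ {ω | ω (n + 1) ∈ A ∩ G})) :=
          tsum_congr hsplit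
      _ = (∑' n, Q (D (n + 1) (A \ G))) + ∑' n, Q (C G n ∩ {ω | ω (n + 1) ∈ A ∩ G}) :=
          ENNReal.tsum_add
      _ = ν (A \ G) + Pinv (A ∩ G) := by rw [hpart1, hpart2]
      _ = ν (A ∩ G) + ν (A \ G) := by rw [hν_inter, add_comm]
      _ = ν A := (hν_union).symm
  refine ⟨M⁻¹ • ν, ⟨?_⟩, ?_, ?_⟩
  · rw [Measure.smul_apply, smul_eq_mul, hνuniv]
    exact ENNReal.inv_mul_cancel hMne0 hMfin.ne
  · intro A hA
    rw [Measure.smul_apply, smul_eq_mul, key hA]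
  · intro A hA
    rw [lintegral_smul_measure, Measure.smul_apply, smul_eq_mul, hinvν hA]
    rfl
end
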